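/- For every integer n ≥ 2, the sum over all type-B permutation tableaux T of size n of the number of indices k with 2 ≤ k ≤ n such that the (k-1)-th and k-th border steps of T are both south steps equals ((2n-1)/24)·|B_n|; equivalently, the expected number of pairs of adjacent south steps in a uniformly random type-B permutation tableau of size n is (2n-1)/24. -/

import Mathlib

/-- A type-B permutation tableau of size `n`, encoded via its border steps and filling.

Border steps are indexed by `Fin n` (index `i` is the `(i+1)`-th step from the
northeast corner); `west i = true` means the `(i+1)`-th step is a west step
(giving a column) and `west i = false` means it is a south step (giving a row
of the original, unshifted diagram).

Rows of the shifted diagram are also indexed by `Fin n`: a south step `r` indexes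
the corresponding original row, and a west step `r` indexes the inserted diagonal
row whose diagonal cell lies in the column of `r`.  The cell in row `r` and the
column of a west step `c` exists iff (`r` is south and `r < c`) or (`r` is west
and `r ≤ c`); in particular the diagonal cell of the column of `c` is `(c, c)`.
Columns are ordered left-to-right by decreasing step index, rows top-to-bottom as:
diagonal rows by decreasing step index, then original rows by increasing step index.

`filling r c = true` means the cell `(r, c)` contains a 1; `filling` is `false`
outside the cells of the diagram (field `support`).  The fields `col_one`,
`no_bad_zero` and `diag_zero` are the three defining conditions of a type-B
permutation tableau. -/
structure TypeBTableau (n : ℕ) where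
  west : Fin n → Bool
  filling : Fin n → Fin n → Bool
  support : ∀ r c : Fin n, filling r c = true →
    west c = true ∧ ((west r = false ∧ (r : ℕ) < (c : ℕ)) ∨ (west r = true ∧ (r : ℕ) ≤ (c : ℕ)))
  col_one : ∀ c : Fin n, west c = true → ∃ r : Fin n, filling r c = true
  no_bad_zero : ∀ r c : Fin n,
    (west c = true ∧ ((west r = false ∧ (r : ℕ) < (c : ℕ)) ∨ (west r = true ∧ (r : ℕ) ≤ (c : ℕ)))) →
    filling r c = false →
    ¬((∃ r' : Fin n,
        ((west r' = true ∧ west r = false) ∨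
         (west r' = true ∧ west r = true ∧ (r : ℕ) < (r' : ℕ)) ∨
         (west r' = false ∧ west r = false ∧ (r' : ℕ) < (r : ℕ))) ∧
        filling r' c = true) ∧
      (∃ c' : Fin n, (c : ℕ) < (c' : ℕ) ∧ filling r c' = true))
  diag_zero : ∀ j : Fin n, west j = true → filling j j = false →
    ∀ c : Fin n, filling j c = false

namespace TypeBTableau

noncomputable instance instFintype {n : ℕ} : Fintype (TypeBTableau n) :=
  Fintype.ofInjective (fun T => (T.west, T.filling)) (by
    rintro ⟨w1, f1, _, _, _, _⟩ ⟨w2, f2, _, _, _, _⟩ h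
    simp only [Prod.mk.injEq] at h
    obtain ⟨h1, h2⟩ := h
    subst h1; subst h2; rfl)

end TypeBTableau

set_option linter.unnecessarySimpa false

namespace TypeBTableau

open Finset
open scoped Classical

variable {n : ℕ}

lemma ext' {T S : TypeBTableau n} (hw : T.west = S.west) (hf : T.filling = S.filling) : T = S := by
  cases T; cases S; simp_all

def IsCell (T : TypeBTableau n) (r c : Fin n) : Prop :=
  T.west c = true ∧ ((T.west r = false ∧ (r : ℕ) < (c : ℕ)) ∨ (T.west r = true ∧ (r : ℕ) ≤ (c : ℕ)))

def Abv (T : TypeBTableau n) (r' r : Fin n) : Prop :=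
  (T.west r' = true ∧ T.west r = false) ∨
  (T.west r' = true ∧ T.west r = true ∧ (r : ℕ) < (r' : ℕ)) ∨
  (T.west r' = false ∧ T.west r = false ∧ (r' : ℕ) < (r : ℕ))

def key (T : TypeBTableau n) (r : Fin n) : ℕ :=
  if T.west r = true then n - 1 - (r : ℕ) else n + (r : ℕ)

lemma abv_iff_key {T : TypeBTableau n} {r' r : Fin n} :
    Abv T r' r ↔ key T r' < key T r := by
  have h1 := r.isLt; have h2 := r'.isLt
  unfold Abv key
  cases hw : T.west r' <;> cases hw2 : T.west r <;> simp <;> omega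

lemma key_inj {T : TypeBTableau n} {r r' : Fin n} (h : key T r = key T r') : r = r' := by
  have h1 := r.isLt; have h2 := r'.isLt
  unfold key at h
  apply Fin.ext
  cases hw : T.west r <;> cases hw2 : T.west r' <;> rw [hw, hw2] at h <;> simp at h <;> omega

def Unres (T : TypeBTableau n) (r : Fin n) : Prop :=
  (T.west r = true → T.filling r r = true) ∧
  ∀ c r' : Fin n, IsCell T r c → T.filling r c = false → Abv T r' r → T.filling r' c = false

noncomputable def freeRows (T : TypeBTableau n) : ℕ :=
  ∑ r : Fin n, if Unres T r then 1 else 0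


/-- Restriction: delete the last border step. -/
def restrict (T : TypeBTableau (n+1)) : TypeBTableau n where
  west i := T.west i.castSucc
  filling r c := T.filling r.castSucc c.castSucc
  support r c h := by simpa using T.support r.castSucc c.castSucc h
  col_one c hc := by
    obtain ⟨r, hr⟩ := T.col_one c.castSucc hc
    have hs := (T.support _ _ hr).2
    have hrn : (r : ℕ) < n := by
      have hcn : ((c.castSucc : Fin (n+1)) : ℕ) < n := by simp
      rcases hs with ⟨_, h⟩ | ⟨_, h⟩ <;> omega
    refine ⟨⟨(r : ℕ), hrn⟩, ?_⟩
    show T.filling (⟨(r : ℕ), hrn⟩ : Fin n).castSucc c.castSucc = true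
    rwa [show (⟨(r : ℕ), hrn⟩ : Fin n).castSucc = r from Fin.ext rfl]
  no_bad_zero r c hcell h0 := by
    rintro ⟨⟨r', habv, h1⟩, ⟨c', hlt, h2⟩⟩
    refine T.no_bad_zero r.castSucc c.castSucc (by simpa using hcell) h0
      ⟨⟨r'.castSucc, by simpa using habv, h1⟩, ⟨c'.castSucc, by simpa using hlt, h2⟩⟩
  diag_zero j hj h0 c := T.diag_zero j.castSucc hj h0 c.castSucc

@[simp] lemma restrict_west (T : TypeBTableau (n+1)) (i : Fin n) :
    (restrict T).west i = T.west i.castSucc := rfl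
@[simp] lemma restrict_filling (T : TypeBTableau (n+1)) (r c : Fin n) :
    (restrict T).filling r c = T.filling r.castSucc c.castSucc := rfl


/-- South extension: append a south step (empty row) at the end. -/
def extS (T : TypeBTableau n) : TypeBTableau (n+1) where
  west := Fin.snoc T.west false
  filling := Fin.snoc (fun r => Fin.snoc (T.filling r) false) (fun _ => false)
  support r c h := by
    induction r using Fin.lastCases with
    | last => simp at h
    | cast r =>
      induction c using Fin.lastCases with
      | last => simp at h
      | cast c =>
        simp only [Fin.snoc_castSucc] at h ⊢
        simpa using T.support r c h
  col_one c hc := by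
    induction c using Fin.lastCases with
    | last => simp at hc
    | cast c =>
      simp only [Fin.snoc_castSucc] at hc
      obtain ⟨r, hr⟩ := T.col_one c hc
      exact ⟨r.castSucc, by simpa using hr⟩
  no_bad_zero r c hcell h0 := by
    rintro ⟨⟨r', habv, h1⟩, c', hlt, h2⟩
    induction c using Fin.lastCases with
    | last => simp at hcell
    | cast c =>
      induction r using Fin.lastCases with
      | last =>
        have hc := c.isLt
        rcases hcell.2 with ⟨_, h⟩ | ⟨h, _⟩
        · simp at h; omega
        · simp at h
      | cast r =>
        induction r' using Fin.lastCases with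
        | last => simp at h1
        | cast r' =>
          induction c' using Fin.lastCases with
          | last => simp at h2
          | cast c' =>
            simp only [Fin.snoc_castSucc] at h0 h1 h2
            refine T.no_bad_zero r c (by simpa using hcell) h0
              ⟨⟨r', by simpa using habv, h1⟩, c', by simpa using hlt, h2⟩
  diag_zero j hj h0 c := by
    induction j using Fin.lastCases with
    | last => simp at hj
    | cast j =>
      simp only [Fin.snoc_castSucc] at hj h0
      induction c using Fin.lastCases with
      | last => simp
      | cast c => simpa using T.diag_zero j hj h0 c

/-- Data for a west extension. -/
def ExtData (T : TypeBTableau n) : Type :=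
  {p : Bool × Finset (Fin n) //
    (∀ r ∈ p.2, Unres T r) ∧ (p.1 = true ∨ p.2.Nonempty)}

/-- West extension: append a west step (full column) at the end, with diagonal
cell `d.1.1` and cell in old row `r` given by `d.1.2 r`. -/
def extW (T : TypeBTableau n) (d : ExtData T) : TypeBTableau (n+1) where
  west := Fin.snoc T.west true
  filling := Fin.snoc (fun r => Fin.snoc (T.filling r) (if r ∈ d.1.2 then true else false))
    (Fin.snoc (fun _ => false) d.1.1)
  support r c h := by
    induction r using Fin.lastCases with
    | last =>
      induction c using Fin.lastCases with
      | last => exact ⟨by simp, Or.inr ⟨by simp, le_refl _⟩⟩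
      | cast c => simp at h
    | cast r =>
      induction c using Fin.lastCases with
      | last =>
        have hr := r.isLt
        refine ⟨by simp, ?_⟩
        cases hw : T.west r with
        | false => exact Or.inl ⟨by simpa using hw, by simpa using hr⟩
        | true => exact Or.inr ⟨by simpa using hw, by simp⟩
      | cast c =>
        simp only [Fin.snoc_castSucc] at h ⊢
        simpa using T.support r c h
  col_one c hc := by
    induction c using Fin.lastCases with
    | last =>
      rcases d.2.2 with hb | ⟨r, hr⟩
      · exact ⟨Fin.last n, by simpa using hb⟩
      · exact ⟨r.castSucc, by simpa using hr⟩
    | cast c =>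
      simp only [Fin.snoc_castSucc] at hc
      obtain ⟨r, hr⟩ := T.col_one c hc
      exact ⟨r.castSucc, by simpa using hr⟩
  no_bad_zero r c hcell h0 := by
    rintro ⟨⟨r', habv, h1⟩, c', hlt, h2⟩
    induction c using Fin.lastCases with
    | last =>
      have := c'.isLt
      simp only [Fin.val_last] at hlt
      omega
    | cast c =>
      induction r using Fin.lastCases with
      | last =>
        have hc := c.isLt
        rcases hcell.2 with ⟨h, _⟩ | ⟨_, h⟩
        · simp at h
        · simp at h; omega
      | cast r =>
        induction r' using Fin.lastCases with
        | last => simp at h1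
        | cast r' =>
          simp only [Fin.snoc_castSucc] at h0 h1
          have hcell' : IsCell T r c := by simpa [IsCell] using hcell
          have habv' : Abv T r' r := by simpa [Abv] using habv
          induction c' using Fin.lastCases with
          | last =>
            simp only [Fin.snoc_castSucc, Fin.snoc_last] at h2
            have hu := d.2.1 r (by revert h2; split <;> simp_all)
            exact absurd (hu.2 c r' hcell' h0 habv') (by simp [h1])
          | cast c' =>
            simp only [Fin.snoc_castSucc] at h2
            refine T.no_bad_zero r c hcell' h0
              ⟨⟨r', habv', h1⟩, c', by simpa using hlt, h2⟩
  diag_zero j hj h0 c := by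
    induction j using Fin.lastCases with
    | last =>
      simp only [Fin.snoc_last] at h0
      induction c using Fin.lastCases with
      | last => simpa using h0
      | cast c => simp
    | cast j =>
      simp only [Fin.snoc_castSucc] at hj h0
      induction c using Fin.lastCases with
      | last =>
        simp only [Fin.snoc_castSucc, Fin.snoc_last]
        by_cases hj2 : j ∈ d.1.2
        · exact absurd ((d.2.1 j hj2).1 hj) (by simp [h0])
        · simp [hj2]
      | cast c => simpa using T.diag_zero j hj h0 c


variable {T : TypeBTableau n} {d : ExtData T}

@[simp] lemma extS_west_castSucc (i : Fin n) : (extS T).west i.castSucc = T.west i := by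
  simp [extS]
@[simp] lemma extS_west_last : (extS T).west (Fin.last n) = false := by simp [extS]
@[simp] lemma extS_filling_cc (r c : Fin n) :
    (extS T).filling r.castSucc c.castSucc = T.filling r c := by simp [extS]
@[simp] lemma extS_filling_cl (r : Fin n) :
    (extS T).filling r.castSucc (Fin.last n) = false := by simp [extS]
@[simp] lemma extS_filling_l (c : Fin (n+1)) :
    (extS T).filling (Fin.last n) c = false := by simp [extS]

@[simp] lemma extW_west_castSucc (i : Fin n) : (extW T d).west i.castSucc = T.west i := by
  simp [extW]
@[simp] lemma extW_west_last : (extW T d).west (Fin.last n) = true := by simp [extW]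
@[simp] lemma extW_filling_cc (r c : Fin n) :
    (extW T d).filling r.castSucc c.castSucc = T.filling r c := by simp [extW]
@[simp] lemma extW_filling_cl (r : Fin n) :
    (extW T d).filling r.castSucc (Fin.last n) = (if r ∈ d.1.2 then true else false) := by
  simp [extW]
@[simp] lemma extW_filling_lc (c : Fin n) :
    (extW T d).filling (Fin.last n) c.castSucc = false := by simp [extW]
@[simp] lemma extW_filling_ll :
    (extW T d).filling (Fin.last n) (Fin.last n) = d.1.1 := by simp [extW]

lemma restrict_extS : restrict (extS T) = T := by
  refine ext' (funext fun i => ?_) (funext fun r => funext fun c => ?_) <;> simp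

lemma restrict_extW : restrict (extW T d) = T := by
  refine ext' (funext fun i => ?_) (funext fun r => funext fun c => ?_) <;> simp

lemma isCell_cc_extS {r c : Fin n} : IsCell (extS T) r.castSucc c.castSucc ↔ IsCell T r c := by
  simp [IsCell]
lemma isCell_cc_extW {r c : Fin n} : IsCell (extW T d) r.castSucc c.castSucc ↔ IsCell T r c := by
  simp [IsCell]
lemma abv_cc_extS {r' r : Fin n} : Abv (extS T) r'.castSucc r.castSucc ↔ Abv T r' r := by
  simp [Abv]
lemma abv_cc_extW {r' r : Fin n} : Abv (extW T d) r'.castSucc r.castSucc ↔ Abv T r' r := by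
  simp [Abv]

lemma not_isCell_lc_extS {c : Fin (n+1)} : ¬ IsCell (extS T) (Fin.last n) c := by
  rintro ⟨h1, ⟨h2, h3⟩ | ⟨h2, h3⟩⟩
  · induction c using Fin.lastCases with
    | last => simp at h3
    | cast c => have := c.isLt; simp at h3; omega
  · simp at h2
lemma not_isCell_cl_extS {r : Fin n} : ¬ IsCell (extS T) r.castSucc (Fin.last n) := by
  rintro ⟨h1, -⟩; simp at h1
lemma not_abv_l_extS {r : Fin n} : ¬ Abv (extS T) (Fin.last n) r.castSucc := by
  rintro (⟨h, -⟩ | ⟨h, -⟩ | ⟨-, -, h⟩)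
  · simp at h
  · simp at h
  · have := r.isLt; simp at h; omega

lemma isCell_cl_extW {r : Fin n} : IsCell (extW T d) r.castSucc (Fin.last n) := by
  refine ⟨by simp, ?_⟩
  have := r.isLt
  cases hw : T.west r with
  | false => exact Or.inl ⟨by simpa using hw, by simpa⟩
  | true => exact Or.inr ⟨by simpa using hw, by simp⟩
lemma not_isCell_lc_extW {c : Fin n} : ¬ IsCell (extW T d) (Fin.last n) c.castSucc := by
  rintro ⟨h1, ⟨h2, h3⟩ | ⟨h2, h3⟩⟩
  · simp at h2
  · have := c.isLt; simp at h3; omega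
lemma abv_l_extW {r : Fin n} : Abv (extW T d) (Fin.last n) r.castSucc := by
  have := r.isLt
  cases hw : T.west r with
  | false => exact Or.inl ⟨by simp, by simpa using hw⟩
  | true => exact Or.inr (Or.inl ⟨by simp, by simpa using hw, by simpa⟩)
lemma not_abv_c_l_extW {r : Fin n} : ¬ Abv (extW T d) r.castSucc (Fin.last n) := by
  rintro (⟨-, h⟩ | ⟨-, -, h⟩ | ⟨-, h, -⟩)
  · simp at h
  · have := r.isLt; simp at h; omega
  · simp at h

lemma unres_last_extS : Unres (extS T) (Fin.last n) := by
  constructor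
  · intro h; simp at h
  · intro c r' hc; exact absurd hc not_isCell_lc_extS

lemma unres_cast_extS {r : Fin n} : Unres (extS T) r.castSucc ↔ Unres T r := by
  constructor
  · rintro ⟨h1, h2⟩
    refine ⟨fun hw => by simpa using h1 (by simpa using hw), fun c r' hc h0 ha => ?_⟩
    have := h2 c.castSucc r'.castSucc (isCell_cc_extS.2 hc) (by simpa using h0)
      (abv_cc_extS.2 ha)
    simpa using this
  · rintro ⟨h1, h2⟩
    refine ⟨fun hw => by simpa using h1 (by simpa using hw), fun c r' hc h0 ha => ?_⟩
    induction c using Fin.lastCases with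
    | last => exact absurd hc not_isCell_cl_extS
    | cast c =>
      induction r' using Fin.lastCases with
      | last => exact absurd ha not_abv_l_extS
      | cast r' =>
        simp only [extS_filling_cc] at h0 ⊢
        exact h2 c r' (isCell_cc_extS.1 hc) h0 (abv_cc_extS.1 ha)

lemma unres_last_extW : Unres (extW T d) (Fin.last n) ↔ d.1.1 = true := by
  constructor
  · intro h; simpa using h.1 (by simp)
  · intro hb
    refine ⟨fun _ => by simpa, fun c r' hc h0 ha => ?_⟩
    induction c using Fin.lastCases with
    | last => simp [hb] at h0
    | cast c => exact absurd hc not_isCell_lc_extW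

lemma unres_cast_extW {r : Fin n} : Unres (extW T d) r.castSucc ↔
    (Unres T r ∧ (r ∈ d.1.2 ∨
      (d.1.1 = false ∧ ∀ r'' : Fin n, Abv T r'' r → r'' ∉ d.1.2))) := by
  constructor
  · rintro ⟨h1, h2⟩
    have hT : Unres T r := by
      refine ⟨fun hw => by simpa using h1 (by simpa using hw), fun c r' hc h0 ha => ?_⟩
      have := h2 c.castSucc r'.castSucc (isCell_cc_extW.2 hc) (by simpa using h0)
        (abv_cc_extW.2 ha)
      simpa using this
    refine ⟨hT, ?_⟩
    by_cases he : r ∈ d.1.2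
    · exact Or.inl he
    · refine Or.inr ⟨?_, fun r'' ha => ?_⟩
      · have := h2 (Fin.last n) (Fin.last n) isCell_cl_extW (by simp [he]) abv_l_extW
        simpa using this
      · have := h2 (Fin.last n) r''.castSucc isCell_cl_extW (by simp [he])
          (abv_cc_extW.2 ha)
        simpa using this
  · rintro ⟨⟨h1, h2⟩, hd⟩
    refine ⟨fun hw => by simpa using h1 (by simpa using hw), fun c r' hc h0 ha => ?_⟩
    induction c using Fin.lastCases with
    | last =>
      simp only [extW_filling_cl] at h0
      rcases hd with he | ⟨hb, hall⟩
      · rw [if_pos he] at h0; exact absurd h0 (by simp)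
      · induction r' using Fin.lastCases with
        | last => simpa using hb
        | cast r' =>
          simp only [extW_filling_cl]
          rw [if_neg (hall r' (abv_cc_extW.1 ha))]
    | cast c =>
      induction r' using Fin.lastCases with
      | last => simp
      | cast r' =>
        simp only [extW_filling_cc] at h0 ⊢
        exact h2 c r' (isCell_cc_extW.1 hc) h0 (abv_cc_extW.1 ha)


lemma freeRows_extS : freeRows (extS T) = freeRows T + 1 := by
  unfold freeRows
  rw [Fin.sum_univ_castSucc]
  simp [unres_last_extS, unres_cast_extS]

lemma freeRows_extW : freeRows (extW T d) =
    (if d.1.1 = true then 1 else 0) +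
    ∑ r : Fin n, if (Unres T r ∧ (r ∈ d.1.2 ∨
      (d.1.1 = false ∧ ∀ r'' : Fin n, Abv T r'' r → r'' ∉ d.1.2))) then 1 else 0 := by
  unfold freeRows
  rw [Fin.sum_univ_castSucc, add_comm]
  simp only [unres_cast_extW, unres_last_extW]

/-- Rows of the last-row are never filled when the step indices are below n. -/
lemma filling_last_cast (T' : TypeBTableau (n+1)) (c : Fin n) :
    T'.filling (Fin.last n) c.castSucc = false := by
  by_contra h
  have hs := (T'.support _ _ (by simpa using Bool.of_not_eq_false h)).2
  have := c.isLt
  rcases hs with ⟨-, h2⟩ | ⟨-, h2⟩ <;> simp at h2 <;> omega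

lemma filling_cast_last_south (T' : TypeBTableau (n+1)) (hW : T'.west (Fin.last n) = false)
    (r : Fin (n+1)) : T'.filling r (Fin.last n) = false := by
  by_contra h
  have hs := (T'.support _ _ (by simpa using Bool.of_not_eq_false h)).1
  rw [hW] at hs; exact absurd hs (by simp)

lemma unres_of_filling_last (T' : TypeBTableau (n+1)) (r : Fin n)
    (h : T'.filling r.castSucc (Fin.last n) = true) : Unres (restrict T') r := by
  constructor
  · intro hw
    by_contra h0
    have := T'.diag_zero r.castSucc (by simpa using hw)
      (by simpa using Bool.of_not_eq_true h0) (Fin.last n)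
    rw [this] at h; exact absurd h (by simp)
  · intro c r' hc h0 ha
    by_contra h1
    refine T'.no_bad_zero r.castSucc c.castSucc ?_ (by simpa using h0)
      ⟨⟨r'.castSucc, ?_, by simpa using Bool.of_not_eq_false h1⟩,
        ⟨Fin.last n, by simpa using c.isLt, h⟩⟩
    · simpa [IsCell] using hc
    · simpa [Abv] using ha

/-- Reconstruction: a tableau whose last step is south. -/
lemma extS_restrict (T' : TypeBTableau (n+1)) (hW : T'.west (Fin.last n) = false) :
    extS (restrict T') = T' := by
  refine ext' (funext fun i => ?_) (funext fun r => funext fun c => ?_)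
  · induction i using Fin.lastCases with
    | last => simp [hW]
    | cast i => simp
  · induction r using Fin.lastCases with
    | last =>
      induction c using Fin.lastCases with
      | last => simp [(filling_cast_last_south T' hW (Fin.last n)).symm]
      | cast c => simp [(filling_last_cast T' c).symm]
    | cast r =>
      induction c using Fin.lastCases with
      | last => simp [(filling_cast_last_south T' hW r.castSucc).symm]
      | cast c => simp

/-- Extraction data from a tableau whose last step is west. -/
noncomputable def extract (T' : TypeBTableau (n+1)) (hW : T'.west (Fin.last n) = true) :
    ExtData (restrict T') := by
  refine ⟨(T'.filling (Fin.last n) (Fin.last n),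
    Finset.univ.filter (fun r => T'.filling r.castSucc (Fin.last n) = true)),
    fun r h => unres_of_filling_last T' r (by simpa using h), ?_⟩
  obtain ⟨r, hr⟩ := T'.col_one (Fin.last n) hW
  induction r using Fin.lastCases with
  | last => exact Or.inl hr
  | cast r => exact Or.inr ⟨r, by simpa using hr⟩

lemma extW_restrict (T' : TypeBTableau (n+1)) (hW : T'.west (Fin.last n) = true) :
    extW (restrict T') (extract T' hW) = T' := by
  refine ext' (funext fun i => ?_) (funext fun r => funext fun c => ?_)
  · induction i using Fin.lastCases with
    | last => simp [hW]
    | cast i => simp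
  · induction r using Fin.lastCases with
    | last =>
      induction c using Fin.lastCases with
      | last => exact extW_filling_ll
      | cast c => simp [(filling_last_cast T' c).symm]
    | cast r =>
      induction c using Fin.lastCases with
      | last => rw [extW_filling_cl]; simp [extract]
      | cast c => simp

noncomputable instance (T : TypeBTableau n) : Fintype (ExtData T) := by
  unfold ExtData; infer_instance

/-- The global parametrization of tableaux of size `n+1`. -/
noncomputable def Phi (x : Σ T : TypeBTableau n, Option (ExtData T)) : TypeBTableau (n+1) :=
  match x with
  | ⟨T, none⟩ => extS T
  | ⟨T, some d⟩ => extW T d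

lemma restrict_Phi (x : Σ T : TypeBTableau n, Option (ExtData T)) : restrict (Phi x) = x.1 := by
  rcases x with ⟨T, _ | d⟩
  · exact restrict_extS
  · exact restrict_extW

lemma Phi_bijective : Function.Bijective (Phi (n := n)) := by
  constructor
  · rintro ⟨T, o⟩ ⟨S, o'⟩ h
    have hTS : T = S := by
      have h1 := restrict_Phi ⟨T, o⟩
      have h2 := restrict_Phi ⟨S, o'⟩
      rw [h] at h1
      exact h1.symm.trans h2
    subst hTS
    rcases o with _ | d <;> rcases o' with _ | d'
    · rfl
    · have h2 : (extS T).west (Fin.last n) = (extW T d').west (Fin.last n) :=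
        congrArg (fun X => X.west (Fin.last n)) h
      simp at h2
    · have h2 : (extW T d).west (Fin.last n) = (extS T).west (Fin.last n) :=
        congrArg (fun X => X.west (Fin.last n)) h
      simp at h2
    · congr 1
      obtain ⟨⟨b, e⟩, hd⟩ := d
      obtain ⟨⟨b', e'⟩, hd'⟩ := d'
      have hb : b = b' := by
        have h2 : (extW T ⟨⟨b, e⟩, hd⟩).filling (Fin.last n) (Fin.last n) =
            (extW T ⟨⟨b', e'⟩, hd'⟩).filling (Fin.last n) (Fin.last n) :=
          congrArg (fun X => X.filling (Fin.last n) (Fin.last n)) h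
        simpa using (extW_filling_ll (T := T) (d := ⟨⟨b, e⟩, hd⟩)).symm.trans
          (h2.trans (extW_filling_ll (T := T) (d := ⟨⟨b', e'⟩, hd'⟩)))
      have he : e = e' := Finset.ext fun r => by
        have h2 : (extW T ⟨⟨b, e⟩, hd⟩).filling r.castSucc (Fin.last n) =
            (extW T ⟨⟨b', e'⟩, hd'⟩).filling r.castSucc (Fin.last n) :=
          congrArg (fun X => X.filling r.castSucc (Fin.last n)) h
        replace h2 := (extW_filling_cl (T := T) (d := ⟨⟨b, e⟩, hd⟩) r).symm.trans
          (h2.trans (extW_filling_cl (T := T) (d := ⟨⟨b', e'⟩, hd'⟩) r))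
        constructor <;> intro hm <;> by_contra hm' <;> simp [hm, hm'] at h2
      subst hb; subst he; rfl
  · intro T'
    cases hW : T'.west (Fin.last n) with
    | false => exact ⟨⟨restrict T', none⟩, extS_restrict T' hW⟩
    | true => exact ⟨⟨restrict T', some (extract T' hW)⟩, extW_restrict T' hW⟩

lemma sum_fiber (f : TypeBTableau (n+1) → ℝ) :
    ∑ T' : TypeBTableau (n+1), f T' =
      ∑ T : TypeBTableau n, (f (extS T) + ∑ d : ExtData T, f (extW T d)) := by
  rw [← Fintype.sum_bijective Phi Phi_bijective (fun x => f (Phi x)) f (fun x => rfl)]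
  rw [← Finset.univ_sigma_univ, Finset.sum_sigma]
  congr 1; ext T
  rw [Fintype.sum_option]
  rfl


lemma sum_pow_card (y : ℝ) (V : Finset (Fin n)) :
    ∑ s ∈ V.powerset, y ^ s.card = (1 + y) ^ V.card := by
  classical
  induction V using Finset.induction_on with
  | empty => simp
  | @insert a V ha ih =>
    rw [Finset.sum_powerset_insert ha, Finset.card_insert_of_notMem ha]
    have h2 : ∀ s ∈ V.powerset, y ^ (insert a s).card = y * y ^ s.card := by
      intro s hs
      rw [Finset.card_insert_of_notMem (fun hc => ha (Finset.mem_powerset.1 hs hc))]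
      ring
    rw [Finset.sum_congr rfl h2, ← Finset.mul_sum, ih]
    ring

/-- the number of new unrestricted old rows, for a given added column `s` -/
noncomputable def zfun (T : TypeBTableau n) (V s : Finset (Fin n)) : ℕ :=
  ∑ r ∈ V, if (r ∈ s ∨ ∀ r'' : Fin n, Abv T r'' r → r'' ∉ s) then 1 else 0

lemma zfun_empty (V : Finset (Fin n)) : zfun T V ∅ = V.card := by
  unfold zfun
  rw [Finset.card_eq_sum_ones]
  refine Finset.sum_congr rfl fun r _ => ?_
  rw [if_pos (Or.inr fun r'' _ => Finset.notMem_empty r'')]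

lemma sum_pow_zfun (y : ℝ) : ∀ (m : ℕ) (V : Finset (Fin n)), V.card = m →
    ∑ s ∈ V.powerset, y ^ zfun T V s = y * (1 + y) ^ m + y ^ m - y ^ (m + 1) := by
  intro m
  induction m with
  | zero =>
    intro V hV
    rw [Finset.card_eq_zero] at hV
    subst hV
    simp [zfun]
  | succ m ih =>
    intro V hV
    have hne : V.Nonempty := Finset.card_pos.1 (by omega)
    obtain ⟨r₀, hr₀V, hmin⟩ := Finset.exists_min_image V (key T) hne
    have hstrict : ∀ r ∈ V, r ≠ r₀ → key T r₀ < key T r := by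
      intro r hr hne'
      have := hmin r hr
      rcases lt_or_eq_of_le this with h | h
      · exact h
      · exact absurd (key_inj h) (Ne.symm hne')
    set V' := V.erase r₀ with hV'
    have hins : V = insert r₀ V' := (Finset.insert_erase hr₀V).symm
    have hnm : r₀ ∉ V' := Finset.notMem_erase _ _
    have hcard : V'.card = m := by
      rw [hV']; rw [Finset.card_erase_of_mem hr₀V, hV]; omega
    have hmem : ∀ r ∈ V', r ≠ r₀ ∧ r ∈ V := by
      intro r hr
      exact ⟨Finset.ne_of_mem_erase hr, Finset.mem_of_mem_erase hr⟩
    rw [hins, Finset.sum_powerset_insert hnm]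
    have hz1 : ∀ s ∈ V'.powerset, zfun T (insert r₀ V') s = 1 + zfun T V' s := by
      intro s hs
      have hsub := Finset.mem_powerset.1 hs
      unfold zfun
      rw [Finset.sum_insert hnm]
      congr 1
      rw [if_pos]
      right
      intro r'' habv hr''
      have hr''V := hmem r'' (hsub hr'')
      have := hstrict r'' hr''V.2 hr''V.1
      have := abv_iff_key.1 habv
      omega
    have hz2 : ∀ s ∈ V'.powerset, zfun T (insert r₀ V') (insert r₀ s) = 1 + s.card := by
      intro s hs
      have hsub := Finset.mem_powerset.1 hs
      unfold zfun
      rw [Finset.sum_insert hnm]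
      have e1 : (if (r₀ ∈ insert r₀ s ∨ ∀ r'' : Fin n, Abv T r'' r₀ → r'' ∉ insert r₀ s)
          then 1 else 0) = 1 := if_pos (Or.inl (Finset.mem_insert_self _ _))
      rw [e1]
      congr 1
      have e2 : ∀ r ∈ V', (if (r ∈ insert r₀ s ∨ ∀ r'' : Fin n, Abv T r'' r → r'' ∉ insert r₀ s)
          then (1:ℕ) else 0) = if r ∈ s then 1 else 0 := by
        intro r hr
        have hrV := hmem r hr
        have habv : Abv T r₀ r := abv_iff_key.2 (hstrict r hrV.2 hrV.1)
        congr 1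
        apply propext
        constructor
        · rintro (hm | hall)
          · rcases Finset.mem_insert.1 hm with h | h
            · exact absurd h hrV.1
            · exact h
          · exact absurd (Finset.mem_insert_self _ _) (hall r₀ habv)
        · intro h; exact Or.inl (Finset.mem_insert_of_mem h)
      rw [Finset.sum_congr rfl e2]
      rw [Finset.sum_ite_mem, Finset.inter_eq_right.2 hsub, Finset.card_eq_sum_ones]
    have key1 : ∑ s ∈ V'.powerset, y ^ zfun T (insert r₀ V') s
        = y * (y * (1 + y) ^ m + y ^ m - y ^ (m + 1)) := by
      rw [← ih V' hcard, Finset.mul_sum]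
      refine Finset.sum_congr rfl fun s hs => ?_
      rw [hz1 s hs]; ring
    have key2 : ∑ s ∈ V'.powerset, y ^ zfun T (insert r₀ V') (insert r₀ s)
        = y * (1 + y) ^ m := by
      have h3 : ∀ s ∈ V'.powerset, y ^ zfun T (insert r₀ V') (insert r₀ s)
          = y * y ^ s.card := by
        intro s hs; rw [hz2 s hs]; ring
      rw [Finset.sum_congr rfl h3, ← Finset.mul_sum, sum_pow_card, hcard]
    rw [key1, key2]
    ring


lemma freeRows_eq_card : freeRows T = (Finset.univ.filter (fun r => Unres T r)).card := by
  unfold freeRows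
  rw [Finset.card_filter]

lemma sum_ite_unres (T : TypeBTableau n) (f : Fin n → ℕ) :
    (∑ r : Fin n, if Unres T r then f r else 0)
      = ∑ r ∈ Finset.univ.filter (fun r => Unres T r), f r := by
  have h1 : ∑ r ∈ Finset.univ.filter (fun r => Unres T r), (if Unres T r then f r else 0)
      = ∑ r : Fin n, (if Unres T r then f r else 0) :=
    Finset.sum_subset (Finset.subset_univ _) (fun r _ hr => if_neg (by simpa using hr))
  rw [← h1]
  exact Finset.sum_congr rfl fun r hr => if_pos (by simpa using hr)

/-- weight of a west extension datum, as a function of the raw pair -/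
noncomputable def gfun (T : TypeBTableau n) (y : ℝ) (p : Bool × Finset (Fin n)) : ℝ :=
  y ^ ((if p.1 = true then 1 else 0) +
    ∑ r : Fin n, if (Unres T r ∧ (r ∈ p.2 ∨
      (p.1 = false ∧ ∀ r'' : Fin n, Abv T r'' r → r'' ∉ p.2))) then 1 else 0)

def Pred (T : TypeBTableau n) (p : Bool × Finset (Fin n)) : Prop :=
  (∀ r ∈ p.2, Unres T r) ∧ (p.1 = true ∨ p.2.Nonempty)

lemma extsum (y : ℝ) (T : TypeBTableau n) :
    ∑ d : ExtData T, y ^ freeRows (extW T d)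
      = 2 * y * (1 + y) ^ freeRows T - y ^ (freeRows T + 1) := by
  classical
  have hUm : freeRows T = (Finset.univ.filter (fun r => Unres T r)).card := freeRows_eq_card
  set U : Finset (Fin n) := Finset.univ.filter (fun r => Unres T r) with hU
  have step1 : ∑ d : ExtData T, y ^ freeRows (extW T d) = ∑ d : ExtData T, gfun T y d.1 := by
    refine Finset.sum_congr rfl fun d _ => ?_
    rw [freeRows_extW]; rfl
  have step2 : ∑ d : ExtData T, gfun T y d.1
      = ∑ p ∈ Finset.univ.filter (Pred T), gfun T y p := by
    refine Finset.sum_bij' (fun d _ => d.1) (fun p hp => ⟨p, ?_⟩) ?_ ?_ ?_ ?_ ?_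
    · have := Finset.mem_filter.1 hp
      exact this.2
    · intro d _
      simp only [Finset.mem_filter, Finset.mem_univ, true_and]
      exact d.2
    · intro p hp; exact Finset.mem_univ _
    · intro d _; rfl
    · intro p hp; rfl
    · intro d _; rfl
  have step3 : ∑ p ∈ Finset.univ.filter (Pred T), gfun T y p
      = ∑ p : Bool × Finset (Fin n), if Pred T p then gfun T y p else 0 :=
    Finset.sum_filter _ _
  rw [step1, step2, step3, Fintype.sum_prod_type, Fintype.sum_bool]
  have hsubU : ∀ s : Finset (Fin n), (∀ r ∈ s, Unres T r) → s ⊆ U := by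
    intro s hs r hr; rw [hU]; simp [hs r hr]
  have hnotmem : ∀ s : Finset (Fin n), ¬(∀ r ∈ s, Unres T r) → s ∉ U.powerset := by
    intro s hs hmem
    rw [Finset.mem_powerset] at hmem
    exact hs fun r hr => by have := hmem hr; rw [hU] at this; simpa using this
  have hcardsum : ∀ s : Finset (Fin n), (∀ r ∈ s, Unres T r) →
      (∑ r : Fin n, if (Unres T r ∧ r ∈ s) then (1:ℕ) else 0) = s.card := by
    intro s hs
    have e0 : ∀ r : Fin n, (if (Unres T r ∧ r ∈ s) then (1:ℕ) else 0)
        = if Unres T r then (if r ∈ s then 1 else 0) else 0 := by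
      intro r; by_cases hu : Unres T r <;> by_cases hm : r ∈ s <;> simp [hu, hm]
    rw [Finset.sum_congr rfl fun r _ => e0 r, sum_ite_unres, ← hU, Finset.sum_ite_mem,
      Finset.inter_eq_right.2 (hsubU s hs), Finset.card_eq_sum_ones]
  have btrue : (∑ s : Finset (Fin n), if Pred T (true, s) then gfun T y (true, s) else 0)
      = y * (1 + y) ^ U.card := by
    have h1 : ∀ s : Finset (Fin n), (if Pred T (true, s) then gfun T y (true, s) else 0)
        = if s ∈ U.powerset then y * y ^ s.card else 0 := by
      intro s
      by_cases hs : ∀ r ∈ s, Unres T r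
      · have hmem : s ∈ U.powerset := Finset.mem_powerset.2 (hsubU s hs)
        rw [if_pos ⟨hs, Or.inl rfl⟩, if_pos hmem]
        have e2 : gfun T y (true, s) = y ^ (1 + s.card) := by
          unfold gfun
          congr 1
          have e3 : ∀ r : Fin n, (Unres T r ∧ (r ∈ s ∨
              (((true, s).1 : Bool) = false ∧
                ∀ r'' : Fin n, Abv T r'' r → r'' ∉ (true, s).2)))
              = (Unres T r ∧ r ∈ s) := by
            intro r; apply propext; constructor
            · rintro ⟨u, hm | ⟨hb, -⟩⟩
              · exact ⟨u, hm⟩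
              · exact absurd hb (by simp)
            · rintro ⟨u, hm⟩; exact ⟨u, Or.inl hm⟩
          simp only [e3]
          rw [hcardsum s hs]
          simp
        rw [e2]
        ring
      · rw [if_neg (fun h => hs h.1), if_neg (hnotmem s hs)]
    rw [Finset.sum_congr rfl (fun s _ => h1 s), Finset.sum_ite_mem, Finset.univ_inter,
      ← Finset.mul_sum, sum_pow_card]
  have bfalse : (∑ s : Finset (Fin n), if Pred T (false, s) then gfun T y (false, s) else 0)
      = y * (1 + y) ^ U.card - y ^ (U.card + 1) := by
    have h1 : ∀ s : Finset (Fin n), (if Pred T (false, s) then gfun T y (false, s) else 0)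
        = if s ∈ U.powerset then (if s.Nonempty then y ^ zfun T U s else 0) else 0 := by
      intro s
      have hgf : gfun T y (false, s) = y ^ zfun T U s := by
        unfold gfun zfun
        congr 1
        have e4 : ∀ r : Fin n, (if (Unres T r ∧ (r ∈ s ∨
            (((false, s).1 : Bool) = false ∧
              ∀ r'' : Fin n, Abv T r'' r → r'' ∉ (false, s).2))) then (1:ℕ) else 0)
            = if Unres T r then
                (if (r ∈ s ∨ ∀ r'' : Fin n, Abv T r'' r → r'' ∉ s) then 1 else 0) else 0 := by
          intro r
          by_cases hu : Unres T r
          · by_cases hx : (r ∈ s ∨ ∀ r'' : Fin n, Abv T r'' r → r'' ∉ s)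
            · rw [if_pos ⟨hu, by rcases hx with h | h; exacts [Or.inl h, Or.inr ⟨rfl, h⟩]⟩,
                if_pos hu, if_pos hx]
            · rw [if_neg ?_, if_pos hu, if_neg hx]
              rintro ⟨-, hm | ⟨-, hall⟩⟩
              · exact hx (Or.inl hm)
              · exact hx (Or.inr hall)
          · rw [if_neg (fun c => hu c.1), if_neg hu]
        rw [Finset.sum_congr rfl fun r _ => e4 r, sum_ite_unres, ← hU]
        simp
      by_cases hs : ∀ r ∈ s, Unres T r
      · have hmem : s ∈ U.powerset := Finset.mem_powerset.2 (hsubU s hs)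
        rw [if_pos hmem]
        by_cases hne : s.Nonempty
        · rw [if_pos ⟨hs, Or.inr hne⟩, if_pos hne, hgf]
        · rw [if_neg ?_, if_neg hne]
          rintro ⟨-, hb | h2⟩
          · exact absurd hb (by simp)
          · exact hne h2
      · rw [if_neg (fun h => hs h.1), if_neg (hnotmem s hs)]
    rw [Finset.sum_congr rfl (fun s _ => h1 s), Finset.sum_ite_mem, Finset.univ_inter]
    have h2 : ∀ s ∈ U.powerset, (if s.Nonempty then y ^ zfun T U s else 0)
        = y ^ zfun T U s - (if s = ∅ then y ^ zfun T U s else 0) := by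
      intro s _
      rcases Finset.eq_empty_or_nonempty s with rfl | hne
      · simp
      · rw [if_pos hne, if_neg (Finset.nonempty_iff_ne_empty.1 hne)]
        ring
    rw [Finset.sum_congr rfl h2, Finset.sum_sub_distrib, Finset.sum_ite_eq' U.powerset ∅,
      if_pos (Finset.empty_mem_powerset U), zfun_empty,
      sum_pow_zfun y U.card U rfl]
    ring
  rw [btrue, bfalse, hUm]
  ring

/-- The master fiber identity. -/
lemma fiber_poly (y : ℝ) (T : TypeBTableau n) :
    y ^ freeRows (extS T) + ∑ d : ExtData T, y ^ freeRows (extW T d)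
      = 2 * y * (1 + y) ^ freeRows T := by
  rw [freeRows_extS, extsum]
  ring


def empty0 : TypeBTableau 0 where
  west := Fin.elim0
  filling := Fin.elim0
  support := fun r => r.elim0
  col_one := fun c => c.elim0
  no_bad_zero := fun r => r.elim0
  diag_zero := fun j => j.elim0

instance : Subsingleton (TypeBTableau 0) :=
  ⟨fun T S => ext' (funext fun i => i.elim0) (funext fun r => r.elim0)⟩

lemma sum_pow_freeRows : ∀ (n : ℕ) (y : ℝ),
    (∑ T : TypeBTableau n, y ^ freeRows T) = 2 ^ n * ∏ j ∈ Finset.range n, (y + j) := by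
  intro n
  induction n with
  | zero =>
    intro y
    have hu : (Finset.univ : Finset (TypeBTableau 0)) = {empty0} :=
      Finset.eq_singleton_iff_unique_mem.2 ⟨Finset.mem_univ _, fun T _ => Subsingleton.elim T empty0⟩
    rw [hu, Finset.sum_singleton]
    have hf : freeRows empty0 = 0 := rfl
    simp [hf]
  | succ n ih =>
    intro y
    rw [sum_fiber (fun T' => y ^ freeRows T'),
      Finset.sum_congr rfl (fun T _ => fiber_poly y T)]
    have : ∀ T : TypeBTableau n, 2 * y * (1 + y) ^ freeRows T
        = (2 * y) * (1 + y) ^ freeRows T := fun T => rfl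
    rw [← Finset.mul_sum, ih (1 + y)]
    rw [Finset.prod_range_succ']
    have hp : ∀ j ∈ Finset.range n, (1 + y + (j : ℝ)) = (y + ((j : ℕ) + 1 : ℕ)) := by
      intro j _; push_cast; ring
    rw [Finset.prod_congr rfl hp]
    push_cast
    ring

lemma prod_one_add_cast (N : ℕ) : (∏ j ∈ Finset.range N, ((1 : ℝ) + j)) = N.factorial := by
  induction N with
  | zero => simp
  | succ N ih =>
    rw [Finset.prod_range_succ, ih, Nat.factorial_succ]
    push_cast
    ring

lemma card_eq (n : ℕ) : (Fintype.card (TypeBTableau n) : ℝ) = 2 ^ n * n.factorial := by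
  have h := sum_pow_freeRows n 1
  simp only [one_pow] at h
  rw [prod_one_add_cast] at h
  rw [Fintype.card, Finset.card_eq_sum_ones, Nat.cast_sum, ← h]
  simp


lemma peel_south (f : TypeBTableau n → ℝ) :
    (∑ T' : TypeBTableau (n+1), if T'.west (Fin.last n) = false then f (restrict T') else 0)
      = ∑ T : TypeBTableau n, f T := by
  rw [sum_fiber]
  refine Finset.sum_congr rfl fun T _ => ?_
  rw [if_pos (by simp), restrict_extS]
  have hz : ∀ d : ExtData T,
      (if (extW T d).west (Fin.last n) = false then f (restrict (extW T d)) else 0) = 0 :=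
    fun d => if_neg (by simp)
  rw [Finset.sum_congr rfl fun d _ => hz d]
  simp

set_option maxHeartbeats 1000000 in
lemma R2aux (i : ℕ) : ∀ (m : ℕ) (y : ℝ),
    (∑ T : TypeBTableau (i + 1 + m + 1),
      if (T.west ⟨i, by omega⟩ = false ∧ T.west ⟨i + 1, by omega⟩ = false)
        then y ^ freeRows T else 0)
      = 2 ^ (m + i) * (∏ t ∈ Finset.range m, (y + t)) * (y + m) ^ 2
          * ∏ j ∈ Finset.range i, (y + m + j) := by
  intro m
  induction m with
  | zero =>
    intro y
    show (∑ T : TypeBTableau (i + 1 + 1),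
        if (T.west ⟨i, by omega⟩ = false ∧ T.west ⟨i + 1, by omega⟩ = false)
          then y ^ freeRows T else 0)
      = 2 ^ (0 + i) * (∏ t ∈ Finset.range 0, (y + (t : ℝ))) * (y + ((0:ℕ) : ℝ)) ^ 2
          * ∏ j ∈ Finset.range i, (y + ((0:ℕ) : ℝ) + (j : ℝ))
    have e1 : ∀ T' : TypeBTableau (i + 1 + 1),
        (if (T'.west ⟨i, by omega⟩ = false ∧ T'.west ⟨i + 1, by omega⟩ = false)
          then y ^ freeRows T' else 0)
        = if T'.west (Fin.last (i + 1)) = false then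
            (if (restrict T').west ⟨i, by omega⟩ = false
              then y ^ (freeRows (restrict T') + 1) else 0)
          else 0 := by
      intro T'
      have hlast : (⟨i + 1, by omega⟩ : Fin (i + 1 + 1)) = Fin.last (i + 1) :=
        Fin.ext rfl
      have hcast : (⟨i, by omega⟩ : Fin (i + 1 + 1))
          = (⟨i, by omega⟩ : Fin (i + 1)).castSucc := Fin.ext rfl
      by_cases hW : T'.west (Fin.last (i + 1)) = false
      · rw [if_pos hW]
        have hrc : T' = extS (restrict T') := (extS_restrict T' hW).symm
        by_cases hc : (restrict T').west ⟨i, by omega⟩ = false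
        · rw [if_pos hc, if_pos ⟨by rw [hcast]; rw [restrict_west] at hc; exact hc,
            by rw [hlast]; exact hW⟩]
          conv_lhs => rw [hrc]
          rw [freeRows_extS]
        · rw [if_neg hc, if_neg ?_]
          rintro ⟨h1, -⟩
          rw [hcast] at h1
          exact hc (by rw [restrict_west]; exact h1)
      · rw [if_neg hW, if_neg ?_]
        rintro ⟨-, h2⟩
        rw [hlast] at h2
        exact hW h2
    have e2 : ∀ T : TypeBTableau (i + 1),
        (if T.west ⟨i, by omega⟩ = false then y ^ (freeRows T + 1) else 0)
        = if T.west (Fin.last i) = false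
            then y ^ (freeRows (restrict T) + 1 + 1) else 0 := by
      intro T
      have hlast : (⟨i, by omega⟩ : Fin (i + 1)) = Fin.last i := Fin.ext rfl
      rw [hlast]
      by_cases hW : T.west (Fin.last i) = false
      · rw [if_pos hW, if_pos hW]
        have hrc : T = extS (restrict T) := (extS_restrict T hW).symm
        conv_lhs => rw [hrc]
        rw [freeRows_extS]
      · rw [if_neg hW, if_neg hW]
    calc (∑ T : TypeBTableau (i + 1 + 1),
        if (T.west ⟨i, by omega⟩ = false ∧ T.west ⟨i + 1, by omega⟩ = false)
          then y ^ freeRows T else 0)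
        = ∑ T' : TypeBTableau (i + 1 + 1),
            (if T'.west (Fin.last (i + 1)) = false then
              (if (restrict T').west ⟨i, by omega⟩ = false
                then y ^ (freeRows (restrict T') + 1) else 0)
            else 0) := Finset.sum_congr rfl fun T' _ => e1 T'
      _ = ∑ T : TypeBTableau (i + 1),
            (if T.west ⟨i, by omega⟩ = false then y ^ (freeRows T + 1) else 0) :=
          peel_south (fun T => if T.west ⟨i, by omega⟩ = false then y ^ (freeRows T + 1) else 0)
      _ = ∑ T : TypeBTableau (i + 1),
            (if T.west (Fin.last i) = false
              then y ^ (freeRows (restrict T) + 1 + 1) else 0) :=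
          Finset.sum_congr rfl fun T _ => e2 T
      _ = ∑ S : TypeBTableau i, y ^ (freeRows S + 1 + 1) :=
          peel_south (fun S => y ^ (freeRows S + 1 + 1))
      _ = ∑ S : TypeBTableau i, y ^ 2 * y ^ freeRows S :=
          Finset.sum_congr rfl fun S _ => by ring
      _ = y ^ 2 * (2 ^ i * ∏ j ∈ Finset.range i, (y + j)) := by
          rw [← Finset.mul_sum, sum_pow_freeRows]
      _ = 2 ^ (0 + i) * (∏ t ∈ Finset.range 0, (y + (t : ℝ))) * (y + ((0:ℕ) : ℝ)) ^ 2
          * ∏ j ∈ Finset.range i, (y + ((0:ℕ) : ℝ) + (j : ℝ)) := by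
          push_cast
          simp only [add_zero, zero_add, Finset.prod_range_zero, mul_one]
          ring
  | succ m ih =>
    intro y
    show (∑ T : TypeBTableau (i + 1 + m + 1 + 1),
        if (T.west ⟨i, by omega⟩ = false ∧ T.west ⟨i + 1, by omega⟩ = false)
          then y ^ freeRows T else 0)
      = 2 ^ (m + 1 + i) * (∏ t ∈ Finset.range (m + 1), (y + (t : ℝ)))
          * (y + (((m + 1 : ℕ)) : ℝ)) ^ 2
          * ∏ j ∈ Finset.range i, (y + (((m + 1 : ℕ)) : ℝ) + (j : ℝ))
    have hmain : ∀ T : TypeBTableau (i + 1 + m + 1),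
        ((if ((extS T).west ⟨i, by omega⟩ = false ∧ (extS T).west ⟨i + 1, by omega⟩ = false)
            then y ^ freeRows (extS T) else 0)
          + ∑ d : ExtData T,
            (if ((extW T d).west ⟨i, by omega⟩ = false
                ∧ (extW T d).west ⟨i + 1, by omega⟩ = false)
              then y ^ freeRows (extW T d) else 0))
        = if (T.west ⟨i, by omega⟩ = false ∧ T.west ⟨i + 1, by omega⟩ = false)
            then 2 * y * (1 + y) ^ freeRows T else 0 := by
      intro T
      have hcast : (⟨i, by omega⟩ : Fin (i + 1 + m + 1 + 1))
          = (⟨i, by omega⟩ : Fin (i + 1 + m + 1)).castSucc := Fin.ext rfl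
      have hcast1 : (⟨i + 1, by omega⟩ : Fin (i + 1 + m + 1 + 1))
          = (⟨i + 1, by omega⟩ : Fin (i + 1 + m + 1)).castSucc := Fin.ext rfl
      rw [hcast, hcast1]
      simp only [extS_west_castSucc, extW_west_castSucc]
      by_cases hc : (T.west ⟨i, by omega⟩ = false ∧ T.west ⟨i + 1, by omega⟩ = false)
      · rw [if_pos hc, if_pos hc, Finset.sum_congr rfl fun d _ => if_pos hc]
        exact fiber_poly y T
      · rw [if_neg hc, if_neg hc, Finset.sum_congr rfl fun d _ => if_neg hc]
        simp
    calc (∑ T : TypeBTableau (i + 1 + m + 1 + 1),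
        if (T.west ⟨i, by omega⟩ = false ∧ T.west ⟨i + 1, by omega⟩ = false)
          then y ^ freeRows T else 0)
        = ∑ T : TypeBTableau (i + 1 + m + 1),
            ((if ((extS T).west ⟨i, by omega⟩ = false
                ∧ (extS T).west ⟨i + 1, by omega⟩ = false)
              then y ^ freeRows (extS T) else 0)
            + ∑ d : ExtData T,
              (if ((extW T d).west ⟨i, by omega⟩ = false
                  ∧ (extW T d).west ⟨i + 1, by omega⟩ = false)
                then y ^ freeRows (extW T d) else 0)) := sum_fiber _
      _ = ∑ T : TypeBTableau (i + 1 + m + 1),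
            (if (T.west ⟨i, by omega⟩ = false ∧ T.west ⟨i + 1, by omega⟩ = false)
              then 2 * y * (1 + y) ^ freeRows T else 0) :=
          Finset.sum_congr rfl fun T _ => hmain T
      _ = 2 * y * ∑ T : TypeBTableau (i + 1 + m + 1),
            (if (T.west ⟨i, by omega⟩ = false ∧ T.west ⟨i + 1, by omega⟩ = false)
              then (1 + y) ^ freeRows T else 0) := by
          rw [Finset.mul_sum]
          refine Finset.sum_congr rfl fun T _ => ?_
          by_cases hc : (T.west ⟨i, by omega⟩ = false ∧ T.west ⟨i + 1, by omega⟩ = false) <;>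
            simp [hc]
      _ = 2 * y * (2 ^ (m + i) * (∏ t ∈ Finset.range m, ((1 + y) + t)) * ((1 + y) + m) ^ 2
          * ∏ j ∈ Finset.range i, ((1 + y) + m + j)) := by
          rw [ih (1 + y)]
      _ = 2 ^ (m + 1 + i) * (∏ t ∈ Finset.range (m + 1), (y + (t : ℝ)))
          * (y + (((m + 1 : ℕ)) : ℝ)) ^ 2
          * ∏ j ∈ Finset.range i, (y + (((m + 1 : ℕ)) : ℝ) + (j : ℝ)) := by
          rw [Finset.prod_range_succ']
          have hp1 : ∀ t ∈ Finset.range m, (y + (((t : ℕ) + 1 : ℕ) : ℝ)) = (1 + y + t) := by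
            intro t _; push_cast; ring
          rw [Finset.prod_congr rfl hp1]
          have hp2 : ∀ j ∈ Finset.range i, ((y + ((m + 1 : ℕ) : ℝ)) + (j : ℝ))
              = (1 + y + m + j) := by
            intro j _; push_cast; ring
          rw [Finset.prod_congr rfl hp2]
          push_cast
          ring


lemma R2' (N i : ℕ) (h : i + 2 ≤ N) :
    (∑ T : TypeBTableau N,
      if (T.west ⟨i, by omega⟩ = false ∧ T.west ⟨i + 1, by omega⟩ = false)
        then (1:ℝ) else 0)
    = 2 ^ (N - 2) * (N - 2).factorial * ((N - 1 - i : ℕ) : ℝ) ^ 2 := by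
  obtain ⟨m, rfl⟩ : ∃ m, N = i + 1 + m + 1 := ⟨N - i - 2, by omega⟩
  have h2 := R2aux i m 1
  have e : ∀ T : TypeBTableau (i + 1 + m + 1),
      (if (T.west ⟨i, by omega⟩ = false ∧ T.west ⟨i + 1, by omega⟩ = false)
        then (1:ℝ) else 0)
      = (if (T.west ⟨i, by omega⟩ = false ∧ T.west ⟨i + 1, by omega⟩ = false)
        then (1:ℝ) ^ freeRows T else 0) := by
    intro T
    by_cases hc : (T.west ⟨i, by omega⟩ = false ∧ T.west ⟨i + 1, by omega⟩ = false) <;>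
      simp [hc]
  rw [Finset.sum_congr rfl fun T _ => e T, h2]
  have hN2 : i + 1 + m + 1 - 2 = m + i := by omega
  have hN1 : i + 1 + m + 1 - 1 - i = m + 1 := by omega
  rw [hN2, hN1]
  have hprod : (∏ t ∈ Finset.range m, ((1:ℝ) + t)) * (∏ j ∈ Finset.range i, ((1:ℝ) + m + j))
      = (m + i).factorial := by
    rw [← prod_one_add_cast (m + i), Finset.prod_range_add]
    congr 1
    refine Finset.prod_congr rfl fun j _ => ?_
    push_cast
    ring
  have h1m : ((1:ℝ) + m) = ((m + 1 : ℕ) : ℝ) := by push_cast; ring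
  calc 2 ^ (m + i) * (∏ t ∈ Finset.range m, ((1:ℝ) + t)) * ((1:ℝ) + m) ^ 2
      * ∏ j ∈ Finset.range i, ((1:ℝ) + m + j)
      = 2 ^ (m + i) * (((1:ℝ) + m) ^ 2) *
        ((∏ t ∈ Finset.range m, ((1:ℝ) + t)) * ∏ j ∈ Finset.range i, ((1:ℝ) + m + j)) := by
        ring
    _ = 2 ^ (m + i) * ((m + i).factorial : ℝ) * ((m + 1 : ℕ) : ℝ) ^ 2 := by
        rw [hprod, h1m]; ring

lemma sum_sq (N : ℕ) : (∑ j ∈ Finset.range N, (((j + 1 : ℕ)) : ℝ) ^ 2)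
    = (N : ℝ) * (N + 1) * (2 * N + 1) / 6 := by
  induction N with
  | zero => simp
  | succ N ih =>
    rw [Finset.sum_range_succ, ih]
    push_cast
    ring

end TypeBTableau

open Finset

/-- The number of pairs of adjacent south steps of a type-B permutation tableau,
i.e. the number of indices `k` with `2 ≤ k ≤ n` such that the `(k-1)`-th and the
`k`-th border steps are both south steps (encoded as pairs of consecutive
step indices that are both south). -/
def TypeBTableau.adjSouth {n : ℕ} (T : TypeBTableau n) : ℕ :=
  (Finset.univ.filter (fun p : Fin n × Fin n =>
      (p.1 : ℕ) + 1 = (p.2 : ℕ) ∧ T.west p.1 = false ∧ T.west p.2 = false)).card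

open TypeBTableau in
/-- The total number of pairs of adjacent south steps over all type-B permutation
tableaux of size `n` equals `((2n-1)/24) · |B_n|`; i.e. the expected number of
pairs of adjacent south steps in a uniformly random type-B permutation tableau of
size `n` is `(2n-1)/24`. -/
theorem expected_number_adjacent_south_steps (n : ℕ) (hn : 2 ≤ n) :
    (∑ T : TypeBTableau n, (T.adjSouth : ℝ)) =
      (2 * (n : ℝ) - 1) / 24 * (Fintype.card (TypeBTableau n) : ℝ) := by
  obtain ⟨k, rfl⟩ : ∃ k, n = k + 2 := ⟨n - 2, by omega⟩
  set n := k + 2 with hn2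
  have hadj : ∀ T : TypeBTableau n, (T.adjSouth : ℝ) = ∑ p : Fin n × Fin n,
      (if ((p.1 : ℕ) + 1 = (p.2 : ℕ) ∧ T.west p.1 = false ∧ T.west p.2 = false)
        then (1:ℝ) else 0) := by
    intro T
    unfold TypeBTableau.adjSouth
    rw [Finset.card_filter, Nat.cast_sum]
    refine Finset.sum_congr rfl fun p _ => ?_
    by_cases hc : ((p.1 : ℕ) + 1 = (p.2 : ℕ) ∧ T.west p.1 = false ∧ T.west p.2 = false) <;>
      simp [hc]
  rw [Finset.sum_congr rfl fun T _ => hadj T, Finset.sum_comm, Fintype.sum_prod_type]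
  have hinner : ∀ a : Fin n, (∑ b : Fin n, ∑ T : TypeBTableau n,
      (if ((a : ℕ) + 1 = (b : ℕ) ∧ T.west a = false ∧ T.west b = false)
        then (1:ℝ) else 0))
      = if h : (a : ℕ) + 1 < n then
          (2:ℝ) ^ (n - 2) * (n - 2).factorial * ((n - 1 - (a : ℕ) : ℕ) : ℝ) ^ 2 else 0 := by
    intro a
    by_cases ha : (a : ℕ) + 1 < n
    · rw [dif_pos ha]
      rw [Finset.sum_eq_single (⟨(a : ℕ) + 1, ha⟩ : Fin n)]
      · have ha2 : (a : ℕ) + 2 ≤ n := by omega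
        have := R2' n (a : ℕ) ha2
        have hea : (⟨(a : ℕ), by omega⟩ : Fin n) = a := Fin.ext rfl
        rw [hea] at this
        rw [← this]
        refine Finset.sum_congr rfl fun T _ => ?_
        by_cases hc : (T.west a = false ∧ T.west (⟨(a : ℕ) + 1, ha⟩ : Fin n) = false)
        · rw [if_pos hc, if_pos ⟨rfl, hc⟩]
        · rw [if_neg hc, if_neg (fun c => hc c.2)]
      · intro b _ hb
        refine Finset.sum_eq_zero fun T _ => if_neg ?_
        rintro ⟨h1, -⟩
        exact hb (Fin.ext h1.symm)
      · intro hmem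
        exact absurd (Finset.mem_univ _) hmem
    · rw [dif_neg ha]
      refine Finset.sum_eq_zero fun b _ => Finset.sum_eq_zero fun T _ => if_neg ?_
      rintro ⟨h1, -⟩
      have := b.isLt
      omega
  rw [Finset.sum_congr rfl fun a _ => hinner a]
  rw [Fin.sum_univ_eq_sum_range (fun j => if h : j + 1 < n then
    (2:ℝ) ^ (n - 2) * (n - 2).factorial * ((n - 1 - j : ℕ) : ℝ) ^ 2 else 0) n]
  have hfilt : Finset.range (n - 1) = (Finset.range n).filter (fun j => j + 1 < n) := by
    ext j
    simp only [Finset.mem_range, Finset.mem_filter]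
    omega
  have hsum1 : (∑ j ∈ Finset.range n, if h : j + 1 < n then
      (2:ℝ) ^ (n - 2) * (n - 2).factorial * ((n - 1 - j : ℕ) : ℝ) ^ 2 else 0)
      = ∑ j ∈ Finset.range (n - 1),
        (2:ℝ) ^ (n - 2) * (n - 2).factorial * ((n - 1 - j : ℕ) : ℝ) ^ 2 := by
    rw [hfilt, Finset.sum_filter]
    refine Finset.sum_congr rfl fun j _ => ?_
    by_cases hj : j + 1 < n
    · rw [dif_pos hj, if_pos hj]
    · rw [dif_neg hj, if_neg hj]
  rw [hsum1, ← Finset.mul_sum]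
  have hrefl : (∑ j ∈ Finset.range (n - 1), ((n - 1 - j : ℕ) : ℝ) ^ 2)
      = ∑ j ∈ Finset.range (n - 1), ((j + 1 : ℕ) : ℝ) ^ 2 := by
    rw [← Finset.sum_range_reflect (fun j => (((j + 1 : ℕ)) : ℝ) ^ 2) (n - 1)]
    refine Finset.sum_congr rfl fun j hj => ?_
    have hj' := Finset.mem_range.1 hj
    congr 2
    omega
  rw [hrefl, sum_sq, card_eq]
  have e1 : n - 2 = k := by omega
  have e2 : n - 1 = k + 1 := by omega
  rw [e1, e2, hn2]
  have hfac : ((k + 2).factorial : ℝ) = (k + 2) * (k + 1) * (k.factorial : ℝ) := by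
    rw [Nat.factorial_succ, Nat.factorial_succ]
    push_cast
    ring
  rw [hfac]
  push_cast
  ring
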